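/- Let (g,R,P,S) be an admissible quadruple for the differential problem in ℝⁿ on [a,b] and let λ ∈ ℝ. Suppose u and v are C² functions [a,b] → ℝⁿ satisfying w''(t) = R(t)[w(t)] − λ·w(t) on [a,b], w(a) ∈ P, w'(a) + S[w(a)] ∈ P^⊥, and w(b) = 0 (for w = u and w = v). For each μ ∈ ℝ, let J_μ : [a,b] → ℝⁿ be the unique solution of J_μ''(t) = R(t)[J_μ(t)] − μ·J_μ(t) with J_μ(a) = u(a) and J_μ'(a) = u'(a). Then the map μ ↦ (J_μ(b), J_μ'(b)) ∈ ℝⁿ × ℝⁿ is differentiable at μ = λ, and, denoting its derivative there by (w₀, w₁) ∈ ℝⁿ × ℝⁿ, one has ∫ₐᵇ g(u(t), v(t)) dt = ω[(w₀, w₁), (0, v'(b))], where ω[(x₁,x₂),(y₁,y₂)] = g(x₁,y₂) − g(x₂,y₁). -/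

import Mathlib

open Set

/-- The symplectic form `ω` on `ℝ²ⁿ = ℝⁿ × ℝⁿ` associated to `g`:
`ω[(x₁,x₂),(y₁,y₂)] = g(x₁,y₂) − g(x₂,y₁)`. -/
noncomputable def symplForm {n : ℕ} (g : (Fin n → ℝ) →ₗ[ℝ] (Fin n → ℝ) →ₗ[ℝ] ℝ)
    (x y : (Fin n → ℝ) × (Fin n → ℝ)) : ℝ :=
  g x.1 y.2 - g x.2 y.1

/-- The `g`-orthogonal complement of `P` in `ℝⁿ`. -/
def gOrtho {n : ℕ} (g : (Fin n → ℝ) →ₗ[ℝ] (Fin n → ℝ) →ₗ[ℝ] ℝ)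
    (P : Submodule ℝ (Fin n → ℝ)) : Set (Fin n → ℝ) :=
  {x | ∀ p ∈ P, g x p = 0}

lemma gronwallBound_le_mul {K ε x c : ℝ} (hK : 0 < K) (hε : 0 ≤ ε) (hx : x ≤ c) :
    gronwallBound 0 K ε x ≤ ε * ((Real.exp (K * c) - 1) / K) := by
  simp only [gronwallBound_of_K_ne_0 hK.ne']
  have h1 : Real.exp (K * x) ≤ Real.exp (K * c) := Real.exp_le_exp.2 (by nlinarith)
  have h2 : 0 ≤ ε / K := by positivity
  calc 0 * Real.exp (K * x) + ε / K * (Real.exp (K * x) - 1)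
      = ε / K * (Real.exp (K * x) - 1) := by ring
    _ ≤ ε / K * (Real.exp (K * c) - 1) := by gcongr
    _ = ε * ((Real.exp (K * c) - 1) / K) := by ring

lemma gronwall_second_order {E : Type*} [NormedAddCommGroup E] [NormedSpace ℝ E]
    {a b K ε μ : ℝ} {R : ℝ → E →L[ℝ] E} {y y1 f : ℝ → E}
    (hy : ContinuousOn y (Icc a b)) (hy1 : ContinuousOn y1 (Icc a b))
    (hyd : ∀ t ∈ Icc a b, HasDerivWithinAt y (y1 t) (Icc a b) t)
    (hy1d : ∀ t ∈ Icc a b, HasDerivWithinAt y1 (R t (y t) - μ • y t + f t) (Icc a b) t)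
    (hK1 : 1 ≤ K) (hR : ∀ t ∈ Icc a b, ‖R t‖ + |μ| ≤ K)
    (hf : ∀ t ∈ Icc a b, ‖f t‖ ≤ ε)
    (hya : y a = 0) (hy1a : y1 a = 0) :
    ∀ t ∈ Icc a b, ‖y t‖ ≤ gronwallBound 0 K ε (t - a) ∧
      ‖y1 t‖ ≤ gronwallBound 0 K ε (t - a) := by
  intro t ht
  have hε : 0 ≤ ε := le_trans (norm_nonneg _) (hf t ht)
  set F : ℝ → E × E := fun s => (y s, y1 s) with hF
  have hFc : ContinuousOn F (Icc a b) := hy.prodMk hy1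
  have hF' : ∀ s ∈ Ico a b,
      HasDerivWithinAt F (y1 s, R s (y s) - μ • y s + f s) (Ici s) s := fun s hs =>
    ((hyd s (Ico_subset_Icc_self hs)).prodMk
      (hy1d s (Ico_subset_Icc_self hs))).mono_of_mem_nhdsWithin (Icc_mem_nhdsGE_of_mem hs)
  have bound : ∀ s ∈ Ico a b,
      ‖(y1 s, R s (y s) - μ • y s + f s)‖ ≤ K * ‖F s‖ + ε := by
    intro s hs
    have hs' := Ico_subset_Icc_self hs
    have hFs : 0 ≤ ‖F s‖ := norm_nonneg _
    rw [Prod.norm_def]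
    apply max_le
    · calc ‖y1 s‖ ≤ ‖F s‖ := norm_snd_le (F s)
        _ ≤ K * ‖F s‖ + ε := by nlinarith
    · have hb1 : ‖R s (y s)‖ ≤ ‖R s‖ * ‖y s‖ := (R s).le_opNorm _
      have hb2 : ‖μ • y s‖ = |μ| * ‖y s‖ := by rw [norm_smul, Real.norm_eq_abs]
      have hys : ‖y s‖ ≤ ‖F s‖ := norm_fst_le (F s)
      have hRs : ‖R s‖ + |μ| ≤ K := hR s hs'
      have h0 : (0:ℝ) ≤ ‖R s‖ + |μ| := by positivity
      calc ‖R s (y s) - μ • y s + f s‖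
          ≤ ‖R s (y s) - μ • y s‖ + ‖f s‖ := norm_add_le _ _
        _ ≤ (‖R s (y s)‖ + ‖μ • y s‖) + ε := add_le_add (norm_sub_le _ _) (hf s hs')
        _ ≤ ((‖R s‖ + |μ|) * ‖y s‖) + ε := by rw [hb2]; nlinarith [norm_nonneg (y s)]
        _ ≤ K * ‖F s‖ + ε := by nlinarith [norm_nonneg (y s)]
  have ha0 : ‖F a‖ ≤ 0 := by simp [hF, hya, hy1a, Prod.norm_def]
  have key := norm_le_gronwallBound_of_norm_deriv_right_le hFc hF' ha0 bound t ht
  exact ⟨le_trans (norm_fst_le (F t)) key, le_trans (norm_snd_le (F t)) key⟩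

lemma c2_facts {E : Type*} [NormedAddCommGroup E] [NormedSpace ℝ E]
    {w : ℝ → E} {a b : ℝ} (hab : a < b) (hw : ContDiffOn ℝ 2 w (Icc a b)) :
    ContinuousOn w (Icc a b) ∧ ContinuousOn (derivWithin w (Icc a b)) (Icc a b) ∧
    (∀ t ∈ Icc a b, HasDerivWithinAt w (derivWithin w (Icc a b) t) (Icc a b) t) ∧
    (∀ t ∈ Icc a b, HasDerivWithinAt (derivWithin w (Icc a b))
      (derivWithin (derivWithin w (Icc a b)) (Icc a b) t) (Icc a b) t) := by
  have hUD := uniqueDiffOn_Icc hab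
  have h1 : ContDiffOn ℝ 1 (derivWithin w (Icc a b)) (Icc a b) :=
    hw.derivWithin hUD (by norm_num)
  exact ⟨hw.continuousOn, h1.continuousOn,
    fun t ht => ((hw.differentiableOn (by norm_num)) t ht).hasDerivWithinAt,
    fun t ht => ((h1.differentiableOn (by norm_num)) t ht).hasDerivWithinAt⟩

noncomputable def bilinCLM {n : ℕ} (g : (Fin n → ℝ) →ₗ[ℝ] (Fin n → ℝ) →ₗ[ℝ] ℝ) :
    (Fin n → ℝ) →L[ℝ] (Fin n → ℝ) →L[ℝ] ℝ :=
  LinearMap.toContinuousLinearMap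
    { toFun := fun x => LinearMap.toContinuousLinearMap (g x)
      map_add' := fun x y => by ext z; simp
      map_smul' := fun c x => by ext z; simp }

lemma bilinCLM_apply {n : ℕ} (g : (Fin n → ℝ) →ₗ[ℝ] (Fin n → ℝ) →ₗ[ℝ] ℝ) (x y : Fin n → ℝ) :
    bilinCLM g x y = g x y := rfl

set_option maxHeartbeats 1000000 in
/-- Differentiability in the eigenvalue parameter of the endpoint data of the family of
solutions `J_μ`, and the integral formula
`∫ₐᵇ g(u,v) dt = ω[(d/dμ)|_{μ=λ} (J_μ(b), J_μ'(b)), (0, v'(b))]`. -/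
theorem deriv_in_eigenvalue_integral_formula {n : ℕ}
    (g : (Fin n → ℝ) →ₗ[ℝ] (Fin n → ℝ) →ₗ[ℝ] ℝ)
    (R : ℝ → (Fin n → ℝ) →L[ℝ] (Fin n → ℝ))
    (P : Submodule ℝ (Fin n → ℝ)) (S : (Fin n → ℝ) →ₗ[ℝ] (Fin n → ℝ))
    (a b : ℝ) (hab : a < b)
    (hgsymm : ∀ x y, g x y = g y x)
    (hgnd : ∀ x, (∀ y, g x y = 0) → x = 0)
    (hRcont : ContinuousOn R (Icc a b))
    (hRsymm : ∀ t ∈ Icc a b, ∀ x y, g (R t x) y = g x (R t y))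
    (hPnd : ∀ x ∈ P, (∀ y ∈ P, g x y = 0) → x = 0)
    (hSP : ∀ x ∈ P, S x ∈ P)
    (hSsymm : ∀ x ∈ P, ∀ y ∈ P, g (S x) y = g x (S y))
    (lam : ℝ) (u v : ℝ → Fin n → ℝ)
    (hu : ContDiffOn ℝ 2 u (Icc a b))
    (hueq : ∀ t ∈ Icc a b,
      derivWithin (derivWithin u (Icc a b)) (Icc a b) t = R t (u t) - lam • u t)
    (huP : u a ∈ P)
    (huS : (derivWithin u (Icc a b) a + S (u a)) ∈ gOrtho g P)
    (hub : u b = 0)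
    (hv : ContDiffOn ℝ 2 v (Icc a b))
    (hveq : ∀ t ∈ Icc a b,
      derivWithin (derivWithin v (Icc a b)) (Icc a b) t = R t (v t) - lam • v t)
    (hvP : v a ∈ P)
    (hvS : (derivWithin v (Icc a b) a + S (v a)) ∈ gOrtho g P)
    (hvb : v b = 0)
    (J : ℝ → ℝ → Fin n → ℝ)
    (hJc : ∀ μ : ℝ, ContDiffOn ℝ 2 (J μ) (Icc a b))
    (hJeq : ∀ μ : ℝ, ∀ t ∈ Icc a b,
      derivWithin (derivWithin (J μ) (Icc a b)) (Icc a b) t = R t (J μ t) - μ • J μ t)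
    (hJa : ∀ μ : ℝ, J μ a = u a)
    (hJa' : ∀ μ : ℝ, derivWithin (J μ) (Icc a b) a = derivWithin u (Icc a b) a) :
    ∃ w₀ w₁ : Fin n → ℝ,
      HasDerivAt (fun μ : ℝ => (J μ b, derivWithin (J μ) (Icc a b) b)) (w₀, w₁) lam ∧
      (∫ t in a..b, g (u t) (v t))
        = symplForm g (w₀, w₁) (0, derivWithin v (Icc a b) b) := by
  have hUD : UniqueDiffOn ℝ (Icc a b) := uniqueDiffOn_Icc hab
  have haI : a ∈ Icc a b := left_mem_Icc.2 hab.le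
  have hbI : b ∈ Icc a b := right_mem_Icc.2 hab.le
  set u1 := derivWithin u (Icc a b) with hu1def
  obtain ⟨huc, hu1c, hud, hu1d'⟩ := c2_facts hab hu
  have hu1d : ∀ t ∈ Icc a b, HasDerivWithinAt u1 (R t (u t) - lam • u t) (Icc a b) t :=
    fun t ht => (hueq t ht) ▸ hu1d' t ht
  set J1 : ℝ → ℝ → Fin n → ℝ := fun μ => derivWithin (J μ) (Icc a b) with hJ1def
  have hJd : ∀ μ, ∀ t ∈ Icc a b, HasDerivWithinAt (J μ) (J1 μ t) (Icc a b) t :=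
    fun μ => (c2_facts hab (hJc μ)).2.2.1
  have hJ1d : ∀ μ, ∀ t ∈ Icc a b,
      HasDerivWithinAt (J1 μ) (R t (J μ t) - μ • J μ t) (Icc a b) t :=
    fun μ t ht => (hJeq μ t ht) ▸ (c2_facts hab (hJc μ)).2.2.2 t ht
  have hJcont : ∀ μ, ContinuousOn (J μ) (Icc a b) := fun μ => (c2_facts hab (hJc μ)).1
  have hJ1cont : ∀ μ, ContinuousOn (J1 μ) (Icc a b) := fun μ => (c2_facts hab (hJc μ)).2.1
  -- constants
  obtain ⟨K₀, hK₀⟩ := (isCompact_Icc (a := a) (b := b)).exists_bound_of_continuousOn hRcont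
  obtain ⟨Cu, hCu⟩ := (isCompact_Icc (a := a) (b := b)).exists_bound_of_continuousOn huc
  have hCu0 : 0 ≤ Cu := le_trans (norm_nonneg _) (hCu a haI)
  have hK₀0 : 0 ≤ K₀ := le_trans (norm_nonneg _) (hK₀ a haI)
  set K := K₀ + |lam| + 2 with hKdef
  have hK1 : 1 ≤ K := by have := abs_nonneg lam; linarith
  have hKpos : 0 < K := by linarith
  set C := (Real.exp (K * (b - a)) - 1) / K with hCdef
  have hC0 : 0 ≤ C := by
    have h1 : 1 ≤ Real.exp (K * (b - a)) := Real.one_le_exp (by nlinarith)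
    have : 0 ≤ Real.exp (K * (b - a)) - 1 := by linarith
    positivity
  have hKR : ∀ μ : ℝ, |μ - lam| ≤ 1 → ∀ t ∈ Icc a b, ‖R t‖ + |μ| ≤ K := by
    intro μ hμ t ht
    have h1 := hK₀ t ht
    have h2 : |μ| - |lam| ≤ |μ - lam| := abs_sub_abs_le_abs_sub μ lam
    linarith
  -- uniqueness at lam
  have huniq : ∀ t ∈ Icc a b, J lam t = u t ∧ J1 lam t = u1 t := by
    intro t ht
    have hg := gronwall_second_order (R := R) (μ := lam) (K := K) (ε := 0)
      (y := fun s => J lam s - u s) (y1 := fun s => J1 lam s - u1 s) (f := fun _ => (0:Fin n → ℝ))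
      ((hJcont lam).sub huc) ((hJ1cont lam).sub hu1c)
      (fun s hs => (hJd lam s hs).sub (hud s hs))
      (fun s hs => by
        have h := (hJ1d lam s hs).sub (hu1d s hs)
        have hval : (R s (J lam s) - lam • J lam s) - (R s (u s) - lam • u s)
            = R s (J lam s - u s) - lam • (J lam s - u s) + 0 := by
          simp only [map_sub, smul_sub]; abel
        exact hval ▸ h)
      hK1 (hKR lam (by simp) ) (fun s _ => by simp)
      (by simp [hJa lam]) (by simp [hJa' lam, hJ1def, hu1def]) t ht
    have h1 := hg.1
    have h2 := hg.2
    rw [gronwallBound_ε0_δ0] at h1 h2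
    exact ⟨sub_eq_zero.1 (norm_le_zero_iff.1 h1), sub_eq_zero.1 (norm_le_zero_iff.1 h2)⟩
  -- difference quotients
  set D : ℝ → ℝ → Fin n → ℝ := fun μ t => (μ - lam)⁻¹ • (J μ t - u t) with hDdef
  set D1 : ℝ → ℝ → Fin n → ℝ := fun μ t => (μ - lam)⁻¹ • (J1 μ t - u1 t) with hD1def
  have hDc : ∀ μ, ContinuousOn (D μ) (Icc a b) :=
    fun μ => by have h := ((hJcont μ).sub huc).const_smul (μ - lam)⁻¹; exact h
  have hD1c : ∀ μ, ContinuousOn (D1 μ) (Icc a b) :=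
    fun μ => by have h := ((hJ1cont μ).sub hu1c).const_smul (μ - lam)⁻¹; exact h
  have hDa : ∀ μ, D μ a = 0 := fun μ => by simp [hDdef, hJa μ]
  have hD1a : ∀ μ, D1 μ a = 0 := fun μ => by simp [hD1def, hJ1def, hu1def, hJa' μ]
  have hDd : ∀ μ, ∀ t ∈ Icc a b, HasDerivWithinAt (D μ) (D1 μ t) (Icc a b) t :=
    fun μ t ht => by have h := ((hJd μ t ht).sub (hud t ht)).const_smul (μ - lam)⁻¹; exact h
  have hD1d : ∀ μ, μ ≠ lam → ∀ t ∈ Icc a b,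
      HasDerivWithinAt (D1 μ) (R t (D μ t) - μ • D μ t + -(u t)) (Icc a b) t := by
    intro μ hμ t ht
    have h := ((hJ1d μ t ht).sub (hu1d t ht)).const_smul ((μ - lam)⁻¹)
    have hne : μ - lam ≠ 0 := sub_ne_zero.2 hμ
    have hval : (μ - lam)⁻¹ • ((R t (J μ t) - μ • J μ t) - (R t (u t) - lam • u t))
        = R t (D μ t) - μ • D μ t + -(u t) := by
      simp only [hDdef, map_sub, map_smul]
      match_scalars <;> field_simp <;> ring
    exact hval ▸ h
  -- uniform bound on D
  have hDbound : ∀ μ, μ ≠ lam → |μ - lam| ≤ 1 → ∀ t ∈ Icc a b,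
      ‖D μ t‖ ≤ Cu * C ∧ ‖D1 μ t‖ ≤ Cu * C := by
    intro μ h1 h2 t ht
    have hg := gronwall_second_order (R := R) (μ := μ) (K := K) (ε := Cu)
      (y := D μ) (y1 := D1 μ) (f := fun s => -(u s))
      (hDc μ) (hD1c μ) (hDd μ) (hD1d μ h1)
      hK1 (hKR μ h2) (fun s hs => by simpa using hCu s hs)
      (hDa μ) (hD1a μ) t ht
    exact ⟨hg.1.trans (gronwallBound_le_mul hKpos hCu0 (by linarith [ht.2])),
      hg.2.trans (gronwallBound_le_mul hKpos hCu0 (by linarith [ht.2]))⟩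
  -- Lipschitz estimate in μ
  set C2 := Cu * C * C with hC2def
  have hC20 : 0 ≤ C2 := by positivity
  have hLip : ∀ μ ν : ℝ, μ ≠ lam → ν ≠ lam → |μ - lam| ≤ 1 → |ν - lam| ≤ 1 → ∀ t ∈ Icc a b,
      ‖D μ t - D ν t‖ ≤ |μ - ν| * C2 ∧ ‖D1 μ t - D1 ν t‖ ≤ |μ - ν| * C2 := by
    intro μ ν hμ hν hμ1 hν1 t ht
    have hg := gronwall_second_order (R := R) (μ := μ) (K := K) (ε := |μ - ν| * (Cu * C))
      (y := fun s => D μ s - D ν s) (y1 := fun s => D1 μ s - D1 ν s)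
      (f := fun s => (ν - μ) • D ν s)
      ((hDc μ).sub (hDc ν)) ((hD1c μ).sub (hD1c ν))
      (fun s hs => (hDd μ s hs).sub (hDd ν s hs))
      (fun s hs => by
        have h := (hD1d μ hμ s hs).sub (hD1d ν hν s hs)
        have hval : (R s (D μ s) - μ • D μ s + -(u s)) - (R s (D ν s) - ν • D ν s + -(u s))
            = R s (D μ s - D ν s) - μ • (D μ s - D ν s) + (ν - μ) • D ν s := by
          simp only [map_sub, smul_sub, sub_smul]; abel
        exact hval ▸ h)
      hK1 (hKR μ hμ1)
      (fun s hs => by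
        rw [norm_smul, Real.norm_eq_abs, abs_sub_comm ν μ]
        exact mul_le_mul_of_nonneg_left (hDbound ν hν hν1 s hs).1 (abs_nonneg _))
      (by simp [hDa]) (by simp [hD1a]) t ht
    have hε0 : 0 ≤ |μ - ν| * (Cu * C) := by positivity
    constructor
    · refine hg.1.trans (((gronwallBound_le_mul (c := b - a) hKpos hε0 (by linarith [ht.2]))).trans
        (le_of_eq (by rw [hC2def, hCdef]; ring)))
    · refine hg.2.trans (((gronwallBound_le_mul (c := b - a) hKpos hε0 (by linarith [ht.2]))).trans
        (le_of_eq (by rw [hC2def, hCdef]; ring)))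
  -- sequence tending to lam
  set μseq : ℕ → ℝ := fun k => lam + ((k : ℝ) + 1)⁻¹ with hμseqdef
  have hμsub : ∀ k : ℕ, μseq k - lam = ((k : ℝ) + 1)⁻¹ := fun k => by simp [hμseqdef]
  have hseqpos : ∀ k : ℕ, (0:ℝ) < ((k : ℝ) + 1)⁻¹ := fun k => by positivity
  have hμne : ∀ k, μseq k ≠ lam := by
    intro k
    have h := hseqpos k
    intro hcon
    rw [← sub_eq_zero] at hcon
    rw [hμsub k] at hcon
    linarith
  have hinv_le_one : ∀ k : ℕ, ((k : ℝ) + 1)⁻¹ ≤ 1 := by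
    intro k
    rw [inv_le_one_iff₀]
    right
    have : (0:ℝ) ≤ (k:ℝ) := Nat.cast_nonneg k
    linarith
  have hμ1 : ∀ k, |μseq k - lam| ≤ 1 := by
    intro k
    rw [hμsub k, abs_of_pos (hseqpos k)]
    exact hinv_le_one k
  have hinv0 : Filter.Tendsto (fun k : ℕ => ((k : ℝ) + 1)⁻¹) Filter.atTop (nhds 0) := by
    simpa [one_div] using tendsto_one_div_add_atTop_nhds_zero_nat (𝕜 := ℝ)
  set Φ : ℝ → (Fin n → ℝ) × (Fin n → ℝ) := fun μ => (D μ b, D1 μ b) with hΦdef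
  have hΦdist : ∀ μ ν, μ ≠ lam → ν ≠ lam → |μ - lam| ≤ 1 → |ν - lam| ≤ 1 →
      dist (Φ μ) (Φ ν) ≤ C2 * |μ - ν| := by
    intro μ ν h1 h2 h3 h4
    have h := hLip μ ν h1 h2 h3 h4 b hbI
    rw [Prod.dist_eq]
    apply max_le
    · rw [dist_eq_norm]; exact h.1.trans (le_of_eq (mul_comm _ _))
    · rw [dist_eq_norm]; exact h.2.trans (le_of_eq (mul_comm _ _))
  have hcauchy : CauchySeq (fun k => Φ (μseq k)) := by
    refine cauchySeq_of_le_tendsto_0 (fun N => C2 * (2 * ((N : ℝ) + 1)⁻¹)) ?_ ?_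
    · intro j k N hj hk
      refine (hΦdist (μseq j) (μseq k) (hμne j) (hμne k) (hμ1 j) (hμ1 k)).trans ?_
      apply mul_le_mul_of_nonneg_left _ hC20
      have hjN : ((j:ℝ) + 1)⁻¹ ≤ ((N:ℝ) + 1)⁻¹ := by
        apply inv_anti₀ (by positivity)
        have : (N:ℝ) ≤ (j:ℝ) := Nat.cast_le.2 hj
        linarith
      have hkN : ((k:ℝ) + 1)⁻¹ ≤ ((N:ℝ) + 1)⁻¹ := by
        apply inv_anti₀ (by positivity)
        have : (N:ℝ) ≤ (k:ℝ) := Nat.cast_le.2 hk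
        linarith
      have heq : μseq j - μseq k = ((j:ℝ) + 1)⁻¹ - ((k:ℝ) + 1)⁻¹ := by
        simp only [hμseqdef]; ring
      rw [heq]
      calc |((j:ℝ) + 1)⁻¹ - ((k:ℝ) + 1)⁻¹| ≤ |((j:ℝ) + 1)⁻¹| + |((k:ℝ) + 1)⁻¹| := abs_sub _ _
        _ ≤ 2 * ((N : ℝ) + 1)⁻¹ := by
            rw [abs_of_pos (hseqpos j), abs_of_pos (hseqpos k)]; linarith
    · simpa using (hinv0.const_mul 2).const_mul C2
  obtain ⟨L, hL⟩ := cauchySeq_tendsto_of_complete hcauchy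
  have hΦclose : ∀ μ, μ ≠ lam → |μ - lam| ≤ 1 → dist (Φ μ) L ≤ C2 * |μ - lam| := by
    intro μ h1 h2
    have ht1 : Filter.Tendsto (fun k => dist (Φ μ) (Φ (μseq k))) Filter.atTop
        (nhds (dist (Φ μ) L)) := tendsto_const_nhds.dist hL
    have ht2 : Filter.Tendsto (fun k : ℕ => C2 * (|μ - lam| + ((k:ℝ) + 1)⁻¹)) Filter.atTop
        (nhds (C2 * (|μ - lam| + 0))) := (tendsto_const_nhds.add hinv0).const_mul C2
    have hle : ∀ k, dist (Φ μ) (Φ (μseq k)) ≤ C2 * (|μ - lam| + ((k:ℝ) + 1)⁻¹) := by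
      intro k
      refine (hΦdist μ (μseq k) h1 (hμne k) h2 (hμ1 k)).trans ?_
      apply mul_le_mul_of_nonneg_left _ hC20
      have heq : μ - μseq k = (μ - lam) - ((k:ℝ) + 1)⁻¹ := by simp only [hμseqdef]; ring
      rw [heq]
      calc |(μ - lam) - ((k:ℝ) + 1)⁻¹| ≤ |μ - lam| + |((k:ℝ) + 1)⁻¹| := abs_sub _ _
        _ ≤ |μ - lam| + ((k:ℝ) + 1)⁻¹ := by rw [abs_of_pos (hseqpos k)]
    have := le_of_tendsto_of_tendsto' ht1 ht2 hle
    simpa using this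
  have hslope : ∀ μ : ℝ, μ ≠ lam → slope (fun μ' => (J μ' b, J1 μ' b)) lam μ = Φ μ := by
    intro μ h1
    rw [slope_def_module]
    have e1 : J lam b = u b := (huniq b hbI).1
    have e2 : J1 lam b = u1 b := (huniq b hbI).2
    simp only [hΦdef, hDdef, hD1def, e1, e2, Prod.mk_sub_mk, Prod.smul_mk]
  have hderiv : HasDerivAt (fun μ : ℝ => (J μ b, J1 μ b)) L lam := by
    rw [hasDerivAt_iff_tendsto_slope]
    rw [tendsto_iff_dist_tendsto_zero]
    apply squeeze_zero' (g := fun μ => C2 * |μ - lam|)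
    · exact Filter.Eventually.of_forall (fun μ => dist_nonneg)
    · have hball : ∀ᶠ μ in nhds lam, |μ - lam| ≤ 1 := by
        filter_upwards [Metric.closedBall_mem_nhds lam one_pos] with μ hμ
        simpa [Real.dist_eq] using hμ
      filter_upwards [self_mem_nhdsWithin,
        eventually_nhdsWithin_of_eventually_nhds hball] with μ h1 h2
      rw [hslope μ h1]
      exact hΦclose μ h1 h2
    · have hc : Filter.Tendsto (fun μ : ℝ => C2 * |μ - lam|) (nhds lam)
          (nhds (C2 * |lam - lam|)) :=
        ((continuous_const.mul ((continuous_id.sub continuous_const).abs)).tendsto lam)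
      have := hc.mono_left (nhdsWithin_le_nhds (s := {lam}ᶜ))
      simpa using this

  -- v facts
  set v1 := derivWithin v (Icc a b) with hv1def
  obtain ⟨hvc, hv1c, hvd, hv1d'⟩ := c2_facts hab hv
  have hv1d : ∀ t ∈ Icc a b, HasDerivWithinAt v1 (R t (v t) - lam • v t) (Icc a b) t :=
    fun t ht => (hveq t ht) ▸ hv1d' t ht
  obtain ⟨Cv, hCv⟩ := (isCompact_Icc (a := a) (b := b)).exists_bound_of_continuousOn hvc
  have hCv0 : 0 ≤ Cv := le_trans (norm_nonneg _) (hCv a haI)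
  set G := bilinCLM g with hGdef
  have hG : ∀ x y, G x y = g x y := fun x y => rfl
  -- the Wronskian identity
  have hKey : ∀ μ : ℝ, μ ≠ lam → |μ - lam| ≤ 1 →
      G (D μ b) (v1 b) = (∫ t in a..b, G (u t) (v t))
        + (μ - lam) * ∫ t in a..b, G (D μ t) (v t) := by
    intro μ hμ hμ1
    set W : ℝ → ℝ := fun t => G (D1 μ t) (v t) - G (D μ t) (v1 t) with hWdef
    set W' : ℝ → ℝ := fun t => (lam - μ) * G (D μ t) (v t) - G (u t) (v t) with hW'def
    have hWc : ContinuousOn W (Icc a b) :=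
      ((G.continuous.comp_continuousOn (hD1c μ)).clm_apply hvc).sub
        ((G.continuous.comp_continuousOn (hDc μ)).clm_apply hv1c)
    have hW'c : ContinuousOn W' (Icc a b) :=
      (continuousOn_const.mul ((G.continuous.comp_continuousOn (hDc μ)).clm_apply hvc)).sub
        ((G.continuous.comp_continuousOn huc).clm_apply hvc)
    have hWd : ∀ t ∈ Ioo a b, HasDerivWithinAt W (W' t) (Ioi t) t := by
      intro t ht
      have htI : t ∈ Icc a b := Ioo_subset_Icc_self ht
      have hnb : Icc a b ∈ nhds t := Icc_mem_nhds ht.1 ht.2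
      have h1 : HasDerivAt (D μ) (D1 μ t) t := (hDd μ t htI).hasDerivAt hnb
      have h2 : HasDerivAt (D1 μ) (R t (D μ t) - μ • D μ t + -(u t)) t :=
        (hD1d μ hμ t htI).hasDerivAt hnb
      have h3 : HasDerivAt v (v1 t) t := (hvd t htI).hasDerivAt hnb
      have h4 : HasDerivAt v1 (R t (v t) - lam • v t) t := (hv1d t htI).hasDerivAt hnb
      have hc1 : HasDerivAt (fun s => G (D1 μ s)) (G (R t (D μ t) - μ • D μ t + -(u t))) t :=
        G.hasFDerivAt.comp_hasDerivAt t h2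
      have hc2 : HasDerivAt (fun s => G (D μ s)) (G (D1 μ t)) t :=
        G.hasFDerivAt.comp_hasDerivAt t h1
      have hAB := (hc1.clm_apply h3).sub (hc2.clm_apply h4)
      have hval : (G (R t (D μ t) - μ • D μ t + -(u t)) (v t) + G (D1 μ t) (v1 t))
          - (G (D1 μ t) (v1 t) + G (D μ t) (R t (v t) - lam • v t)) = W' t := by
        simp only [hW'def, map_sub, map_add, map_neg, map_smul,
          ContinuousLinearMap.sub_apply, ContinuousLinearMap.add_apply,
          ContinuousLinearMap.neg_apply, ContinuousLinearMap.smul_apply, smul_eq_mul]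
        simp only [hG]
        rw [hRsymm t htI (D μ t) (v t)]
        ring
      exact (hval ▸ hAB).hasDerivWithinAt
    have hW'int : IntervalIntegrable W' MeasureTheory.volume a b := by
      apply ContinuousOn.intervalIntegrable
      rwa [uIcc_of_le hab.le]
    have hftc := intervalIntegral.integral_eq_sub_of_hasDeriv_right_of_le hab.le hWc hWd hW'int
    have hWa : W a = 0 := by simp [hWdef, hDa μ, hD1a μ]
    have hWb : W b = -(G (D μ b)) (v1 b) := by simp [hWdef, hvb]
    have hi1 : IntervalIntegrable (fun t => (G (D μ t)) (v t)) MeasureTheory.volume a b := by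
      apply ContinuousOn.intervalIntegrable
      rw [uIcc_of_le hab.le]
      exact (G.continuous.comp_continuousOn (hDc μ)).clm_apply hvc
    have hi2 : IntervalIntegrable (fun t => (G (u t)) (v t)) MeasureTheory.volume a b := by
      apply ContinuousOn.intervalIntegrable
      rw [uIcc_of_le hab.le]
      exact (G.continuous.comp_continuousOn huc).clm_apply hvc
    have hsplit : (∫ t in a..b, W' t)
        = (lam - μ) * (∫ t in a..b, G (D μ t) (v t)) - ∫ t in a..b, G (u t) (v t) := by
      simp only [hW'def]
      rw [intervalIntegral.integral_sub (hi1.const_mul _) hi2,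
        intervalIntegral.integral_const_mul]
    rw [hsplit, hWb, hWa] at hftc
    linarith
  -- uniform bound on the integral term
  have hIb : ∀ μ, μ ≠ lam → |μ - lam| ≤ 1 →
      |∫ t in a..b, G (D μ t) (v t)| ≤ ‖G‖ * (Cu * C) * Cv * (b - a) := by
    intro μ h1 h2
    have hbd : ∀ t ∈ Set.uIoc a b, ‖G (D μ t) (v t)‖ ≤ ‖G‖ * (Cu * C) * Cv := by
      intro t ht
      have htI : t ∈ Icc a b := by
        rw [uIoc_of_le hab.le] at ht
        exact Ioc_subset_Icc_self ht
      calc ‖G (D μ t) (v t)‖ ≤ ‖G‖ * ‖D μ t‖ * ‖v t‖ := G.le_opNorm₂ _ _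
        _ ≤ ‖G‖ * (Cu * C) * Cv := by
            have hh1 := (hDbound μ h1 h2 t htI).1
            have hh2 := hCv t htI
            have hn1 : (0:ℝ) ≤ ‖G‖ := G.opNorm_nonneg
            have hn3 : (0:ℝ) ≤ ‖v t‖ := norm_nonneg _
            calc ‖G‖ * ‖D μ t‖ * ‖v t‖ ≤ ‖G‖ * (Cu * C) * ‖v t‖ :=
                  mul_le_mul_of_nonneg_right (mul_le_mul_of_nonneg_left hh1 hn1) hn3
              _ ≤ ‖G‖ * (Cu * C) * Cv :=
                  mul_le_mul_of_nonneg_left hh2 (mul_nonneg hn1 (mul_nonneg hCu0 hC0))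
    have hnorm := intervalIntegral.norm_integral_le_of_norm_le_const hbd
    rw [Real.norm_eq_abs] at hnorm
    rw [abs_of_pos (by linarith : (0:ℝ) < b - a)] at hnorm
    exact hnorm
  -- take the limit along μseq
  have hDlim : Filter.Tendsto (fun k => D (μseq k) b) Filter.atTop (nhds L.1) :=
    (continuous_fst.tendsto L).comp hL
  have hglim : Filter.Tendsto (fun k => G (D (μseq k) b) (v1 b)) Filter.atTop
      (nhds (G L.1 (v1 b))) := by
    have hcont : Continuous (fun x : Fin n → ℝ => G x (v1 b)) :=
      G.continuous.clm_apply continuous_const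
    exact (hcont.tendsto L.1).comp hDlim
  have hzero : Filter.Tendsto
      (fun k => (μseq k - lam) * ∫ t in a..b, G (D (μseq k) t) (v t))
      Filter.atTop (nhds 0) := by
    apply squeeze_zero_norm (a := fun k : ℕ => ((k:ℝ) + 1)⁻¹ * (‖G‖ * (Cu * C) * Cv * (b - a)))
    · intro k
      rw [Real.norm_eq_abs, abs_mul, hμsub k, abs_of_pos (hseqpos k)]
      exact mul_le_mul_of_nonneg_left (hIb (μseq k) (hμne k) (hμ1 k)) (hseqpos k).le
    · simpa using hinv0.mul_const (‖G‖ * (Cu * C) * Cv * (b - a))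
  have hsum : Filter.Tendsto
      (fun k => G (D (μseq k) b) (v1 b)
        - (μseq k - lam) * ∫ t in a..b, G (D (μseq k) t) (v t))
      Filter.atTop (nhds (G L.1 (v1 b) - 0)) := hglim.sub hzero
  have hconsteq : (fun k => G (D (μseq k) b) (v1 b)
        - (μseq k - lam) * ∫ t in a..b, G (D (μseq k) t) (v t))
      = fun _ : ℕ => ∫ t in a..b, G (u t) (v t) := by
    funext k
    have := hKey (μseq k) (hμne k) (hμ1 k)
    linarith
  rw [hconsteq] at hsum
  have hfinal : (∫ t in a..b, G (u t) (v t)) = G L.1 (v1 b) - 0 :=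
    tendsto_nhds_unique tendsto_const_nhds hsum
  rw [sub_zero] at hfinal
  -- conclude
  refine ⟨L.1, L.2, ?_, ?_⟩
  · rw [Prod.mk.eta]
    exact hderiv
  · have h1 : symplForm g (L.1, L.2) (0, v1 b) = g L.1 (v1 b) := by
      simp [symplForm]
    rw [h1]
    have h2 : (∫ t in a..b, g (u t) (v t)) = ∫ t in a..b, G (u t) (v t) := by
      simp only [hG]
    rw [h2, hfinal, hG]
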